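/- Let M be the Hermitian n×n matrix with (1,1)-entry a + Σ_{j=1}^{n-1} |u_j|², (1,j+1)-entry u_j z̄, (j+1,1)-entry ū_j z, and lower-right block |z|² Id_{n-1}, where a ≥ |z|². Then M is positive semidefinite, and consequently M − min(a − |z|², 0)·E₁₁ ⪰ 0, where E₁₁ is the matrix unit. -/

import Mathlib

open Matrix
open scoped ComplexOrder
noncomputable section

private lemma blowup_key (k : ℕ) (a : ℝ) (z : ℂ) (u : Fin k → ℂ) (x : Unit ⊕ Fin k → ℂ) :
    star x ⬝ᵥ (Matrix.fromBlocks
      (Matrix.of fun (_ : Unit) (_ : Unit) => ((a + ∑ j, ‖u j‖ ^ 2 : ℝ) : ℂ))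
      (Matrix.of fun (_ : Unit) (j : Fin k) => u j * (starRingEnd ℂ) z)
      (Matrix.of fun (i : Fin k) (_ : Unit) => (starRingEnd ℂ) (u i) * z)
      ((‖z‖ ^ 2 : ℝ) • (1 : Matrix (Fin k) (Fin k) ℂ))) *ᵥ x =
        ((a * Complex.normSq (x (Sum.inl ())) +
          ∑ j, Complex.normSq ((starRingEnd ℂ) (u j) * x (Sum.inl ()) +
            (starRingEnd ℂ) z * x (Sum.inr j)) : ℝ) : ℂ) := by
  simp only [dotProduct, Matrix.mulVec, Fintype.sum_sum_type,
    Finset.univ_unique, Finset.sum_singleton, Matrix.fromBlocks_apply₁₁,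
    Matrix.fromBlocks_apply₁₂, Matrix.fromBlocks_apply₂₁, Matrix.fromBlocks_apply₂₂,
    Matrix.of_apply, Pi.star_apply, Matrix.smul_apply, Matrix.one_apply, smul_ite,
    Complex.real_smul, mul_ite, ite_mul, Finset.sum_ite_eq, Finset.mem_univ, if_true,
    mul_zero, smul_zero, zero_mul, Complex.sq_norm]
  push_cast [Complex.sq_norm, Complex.normSq_eq_conj_mul_self]
  simp only [_root_.map_add, _root_.map_mul, Complex.conj_conj, Complex.star_def,
    Finset.mul_sum, Finset.sum_mul, add_mul, mul_add, show (default : Unit) = () from rfl]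
  rw [add_assoc, add_assoc, ← Finset.sum_add_distrib, ← Finset.sum_add_distrib]
  congr 1
  · ring
  · exact Finset.sum_congr rfl fun j _ => by ring

private lemma blowup_psd (k : ℕ) (a : ℝ) (z : ℂ) (u : Fin k → ℂ)
    (ha : ‖z‖ ^ 2 ≤ a) :
    (Matrix.fromBlocks
      (Matrix.of fun (_ : Unit) (_ : Unit) => ((a + ∑ j, ‖u j‖ ^ 2 : ℝ) : ℂ))
      (Matrix.of fun (_ : Unit) (j : Fin k) => u j * (starRingEnd ℂ) z)
      (Matrix.of fun (i : Fin k) (_ : Unit) => (starRingEnd ℂ) (u i) * z)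
      ((‖z‖ ^ 2 : ℝ) • (1 : Matrix (Fin k) (Fin k) ℂ))).PosSemidef := by
  rw [posSemidef_iff_dotProduct_mulVec]
  constructor
  · ext i j
    rcases i with i | i <;> rcases j with j | j <;>
      simp [Matrix.conjTranspose_apply, Matrix.one_apply, mul_comm, eq_comm,
        apply_ite] <;>
      (split <;> simp_all)
  · intro x
    rw [blowup_key]
    have h0 : (0:ℝ) ≤ a * Complex.normSq (x (Sum.inl ())) +
          ∑ j, Complex.normSq ((starRingEnd ℂ) (u j) * x (Sum.inl ()) +
            (starRingEnd ℂ) z * x (Sum.inr j)) := by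
      have ha0 : 0 ≤ a := le_trans (by positivity) ha
      exact add_nonneg (mul_nonneg ha0 (Complex.normSq_nonneg _))
        (Finset.sum_nonneg fun j _ => Complex.normSq_nonneg _)
    exact_mod_cast h0

/-- The Hermitian matrix `M` with (1,1)-entry `a + Σ|u_j|²`, first row `u_j z̄`
(resp. conjugates in the first column), and lower-right block `|z|² Id`, where
`a ≥ |z|²`, is positive semidefinite; consequently `M - min(a - |z|², 0)·E₁₁ ⪰ 0`. -/
theorem blowup_coefficient_matrix_psd_general (k : ℕ) (a : ℝ) (z : ℂ) (u : Fin k → ℂ)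
    (ha : ‖z‖ ^ 2 ≤ a) :
    (Matrix.fromBlocks
      (Matrix.of fun (_ : Unit) (_ : Unit) => ((a + ∑ j, ‖u j‖ ^ 2 : ℝ) : ℂ))
      (Matrix.of fun (_ : Unit) (j : Fin k) => u j * (starRingEnd ℂ) z)
      (Matrix.of fun (i : Fin k) (_ : Unit) => (starRingEnd ℂ) (u i) * z)
      ((‖z‖ ^ 2 : ℝ) • (1 : Matrix (Fin k) (Fin k) ℂ))).PosSemidef
    ∧ ((Matrix.fromBlocks
      (Matrix.of fun (_ : Unit) (_ : Unit) => ((a + ∑ j, ‖u j‖ ^ 2 : ℝ) : ℂ))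
      (Matrix.of fun (_ : Unit) (j : Fin k) => u j * (starRingEnd ℂ) z)
      (Matrix.of fun (i : Fin k) (_ : Unit) => (starRingEnd ℂ) (u i) * z)
      ((‖z‖ ^ 2 : ℝ) • (1 : Matrix (Fin k) (Fin k) ℂ)))
      - ((min (a - ‖z‖ ^ 2) 0 : ℝ) : ℂ) •
          Matrix.single (Sum.inl ()) (Sum.inl ()) (1 : ℂ)).PosSemidef := by
  have hpsd := blowup_psd k a z u ha
  have hmin : min (a - ‖z‖ ^ 2) 0 = 0 :=
    min_eq_right (sub_nonneg.mpr ha)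
  refine ⟨hpsd, ?_⟩
  rw [hmin]
  simpa using hpsd
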